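/- For any coordinate i, the integral of x_i^2 over the ℓ1-ball {x ∈ ℝ^n : ‖x‖_1 ≤ ρ} equals (2ρ)^{n+1} · ρ / (n+2)!. -/

import Mathlib

open MeasureTheory Real

lemma vol_l1 (m : ℕ) (r : ℝ) (hr : 0 ≤ r) :
    volume {y : Fin m → ℝ | ∑ k, |y k| ≤ r} = ENNReal.ofReal ((2*r)^m / m.factorial) := by
  cases m with
  | zero =>
    have : {y : Fin 0 → ℝ | ∑ k, |y k| ≤ r} = Set.univ := by
      ext y; simp [hr]
    rw [this]
    rw [show (volume : Measure (Fin 0 → ℝ)) = Measure.pi (fun _ => volume) from rfl, Measure.pi_univ]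
    simp
  | succ m =>
    have h := MeasureTheory.volume_sum_rpow_le (ι := Fin (m+1)) (p := 1) le_rfl r
    simp only [Real.rpow_one, one_div, inv_one, div_one, Fintype.card_fin] at h
    rw [show ((1:ℝ) + 1) = 2 by norm_num, Real.Gamma_two] at h
    rw [Real.Gamma_nat_eq_factorial] at h
    rw [h, ← ENNReal.ofReal_pow hr, ← ENNReal.ofReal_mul (by positivity)]
    congr 1
    rw [mul_pow]
    ring

lemma J_eval (m : ℕ) (ρ : ℝ) : ∫ s in (0:ℝ)..ρ, s^2 * (ρ-s)^m
    = ρ^(m+3) * 2 / ((m+1)*(m+2)*(m+3)) := by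
  have h := intervalIntegral.integral_comp_sub_left (a := (0:ℝ)) (b := ρ)
    (fun s => (ρ - s)^2 * s^m) ρ
  simp only [sub_sub_cancel, sub_self, sub_zero] at h
  rw [h]
  have e1 : ∀ s : ℝ, (ρ - s)^2 * s^m = ρ^2 * s^m - 2*ρ * s^(m+1) + s^(m+2) := by
    intro s; ring
  simp_rw [e1]
  have i1 : IntervalIntegrable (fun s : ℝ => ρ^2 * s^m) volume 0 ρ :=
    (intervalIntegral.intervalIntegrable_pow m).const_mul _
  have i2 : IntervalIntegrable (fun s : ℝ => 2*ρ * s^(m+1)) volume 0 ρ :=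
    (intervalIntegral.intervalIntegrable_pow (m+1)).const_mul _
  have i3 : IntervalIntegrable (fun s : ℝ => s^(m+2)) volume 0 ρ :=
    intervalIntegral.intervalIntegrable_pow (m+2)
  rw [intervalIntegral.integral_add (i1.sub i2) i3, intervalIntegral.integral_sub i1 i2,
    intervalIntegral.integral_const_mul, intervalIntegral.integral_const_mul,
    integral_pow, integral_pow, integral_pow]
  have h1 : ((m:ℝ)+1) ≠ 0 := by positivity
  have h2 : ((m:ℝ)+2) ≠ 0 := by positivity
  have h3 : ((m:ℝ)+3) ≠ 0 := by positivity
  field_simp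
  push_cast
  ring

theorem l1_ball_second_moment (n : ℕ) (hn : 1 ≤ n) (ρ : ℝ) (hρ : 0 < ρ) (i : Fin n) :
    ∫ x in {x : Fin n → ℝ | ∑ k, |x k| ≤ ρ}, (x i) ^ 2 =
      (2 * ρ) ^ (n + 1) * ρ / (n + 2).factorial := by
  obtain ⟨m, rfl⟩ : ∃ m, n = m + 1 := ⟨n - 1, (Nat.succ_pred_eq_of_pos hn).symm⟩
  set S : Set (Fin (m+1) → ℝ) := {x | ∑ k, |x k| ≤ ρ} with hS
  have hSmeas : MeasurableSet S := by
    apply measurableSet_le _ measurable_const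
    exact Finset.measurable_sum _ fun k _ => (measurable_pi_apply k).abs
  set T : Set (ℝ × (Fin m → ℝ)) := {p | |p.1| + ∑ k, |p.2 k| ≤ ρ} with hT
  have hTmeas : MeasurableSet T := by
    apply measurableSet_le _ measurable_const
    exact (measurable_fst.abs.add
      (Finset.measurable_sum _ fun k _ => ((measurable_pi_apply k).comp measurable_snd).abs))
  set e := MeasurableEquiv.piFinSuccAbove (fun _ : Fin (m+1) => ℝ) i with he
  have hmp := MeasureTheory.volume_preserving_piFinSuccAbove (fun _ : Fin (m+1) => ℝ) i
  have hpre : e ⁻¹' T = S := by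
    ext x
    simp only [Set.mem_preimage, hT, hS, Set.mem_setOf_eq, he,
      MeasurableEquiv.piFinSuccAbove_apply, Fin.insertNthEquiv, Equiv.coe_fn_symm_mk,
      Fin.removeNth]
    rw [Fin.sum_univ_succAbove (fun k => |x k|) i]
  set g : ℝ × (Fin m → ℝ) → ℝ := T.indicator (fun p => p.1 ^ 2) with hg
  have hcomp : S.indicator (fun x => (x i)^2) = fun x => g (e x) := by
    funext x
    by_cases hx : x ∈ S
    · rw [Set.indicator_of_mem hx, hg, Set.indicator_of_mem (by rw [← hpre] at hx; exact hx)]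
      simp [he]
    · rw [Set.indicator_of_notMem hx, hg,
        Set.indicator_of_notMem (by rw [← hpre] at hx; exact hx)]
  have hvolT : volume T = ENNReal.ofReal ((2*ρ)^(m+1) / (m+1).factorial) := by
    rw [← hmp.measure_preimage hTmeas.nullMeasurableSet, hpre, hS]
    exact vol_l1 (m+1) ρ hρ.le
  -- integrability of g
  have hgint : Integrable g := by
    rw [hg]
    apply (IntegrableOn.integrable_indicator · hTmeas)
    apply Measure.integrableOn_of_bounded (M := ρ^2)
      (f_mble := (measurable_fst.pow_const 2).aestronglyMeasurable)
    · refine (ae_restrict_iff' hTmeas).2 (Filter.Eventually.of_forall fun p hp => ?_)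
      have hnn : (0:ℝ) ≤ ∑ k, |p.2 k| := Finset.sum_nonneg fun k _ => abs_nonneg _
      have hmem : |p.1| + ∑ k, |p.2 k| ≤ ρ := hp
      have h1 : |p.1| ≤ ρ := by linarith
      rw [Real.norm_eq_abs, abs_pow]
      exact pow_le_pow_left₀ (abs_nonneg _) h1 2
    · rw [hvolT]; exact ENNReal.ofReal_ne_top
  rw [← MeasureTheory.integral_indicator hSmeas, hcomp,
    hmp.integral_comp e.measurableEmbedding g]
  rw [Measure.volume_eq_prod] at hgint ⊢
  rw [MeasureTheory.integral_prod g hgint]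
  -- inner integral
  set f : ℝ → ℝ := fun s => if s ≤ ρ then s^2 * (2*(ρ-s))^m / m.factorial else 0 with hf
  have hinner : ∀ t : ℝ, (∫ z : Fin m → ℝ, g (t, z)) = f |t| := by
    intro t
    have hgz : (fun z : Fin m → ℝ => g (t, z))
        = Set.indicator {z : Fin m → ℝ | ∑ k, |z k| ≤ ρ - |t|} (fun _ => t^2) := by
      funext z
      simp only [hg, Set.indicator_apply, hT, Set.mem_setOf_eq]
      by_cases hz : ∑ k, |z k| ≤ ρ - |t|
      · rw [if_pos (by linarith), if_pos hz]
      · rw [if_neg (fun h => hz (by linarith)), if_neg hz]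
    rw [hgz]
    have hBmeas : MeasurableSet {z : Fin m → ℝ | ∑ k, |z k| ≤ ρ - |t|} := by
      apply measurableSet_le _ measurable_const
      exact Finset.measurable_sum _ fun k _ => (measurable_pi_apply k).abs
    rw [MeasureTheory.integral_indicator_const _ hBmeas]
    by_cases ht : |t| ≤ ρ
    · rw [measureReal_def, vol_l1 m (ρ - |t|) (by linarith)]
      simp only [hf]
      rw [if_pos ht, ENNReal.toReal_ofReal (div_nonneg (pow_nonneg (by linarith) m) (Nat.cast_nonneg _)), smul_eq_mul, sq_abs]
      ring
    · have hempty : {z : Fin m → ℝ | ∑ k, |z k| ≤ ρ - |t|} = ∅ := by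
        ext z
        simp only [Set.mem_setOf_eq, Set.mem_empty_iff_false, iff_false, not_le]
        have : (0:ℝ) ≤ ∑ k, |z k| := Finset.sum_nonneg fun k _ => abs_nonneg _
        push_neg at ht; linarith
      rw [hempty]
      simp only [hf]
      rw [if_neg ht]
      simp
  simp_rw [hinner]
  have habs : (∫ t : ℝ, f |t|) = 2 * ∫ s in Set.Ioi (0:ℝ), f s := integral_comp_abs
  rw [habs]
  have hfind : f = Set.indicator (Set.Iic ρ) (fun s => s^2 * (2*(ρ-s))^m / m.factorial) := by
    funext s
    simp only [hf, Set.indicator_apply, Set.mem_Iic]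
  rw [hfind, MeasureTheory.setIntegral_indicator measurableSet_Iic, Set.Ioi_inter_Iic,
    ← intervalIntegral.integral_of_le hρ.le]
  have hexp : ∀ s : ℝ, s^2 * (2*(ρ-s))^m / m.factorial
      = (2^m / m.factorial) * (s^2 * (ρ-s)^m) := by
    intro s; rw [mul_pow]; ring
  simp_rw [hexp]
  rw [intervalIntegral.integral_const_mul, J_eval]
  have hfac : ((m+3).factorial : ℝ)
      = (m.factorial : ℝ) * ((m:ℝ)+1) * ((m:ℝ)+2) * ((m:ℝ)+3) := by
    rw [show m+3 = (m+2)+1 from rfl, Nat.factorial_succ,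
      show m+2 = (m+1)+1 from rfl, Nat.factorial_succ, Nat.factorial_succ]
    push_cast; ring
  have hm0 : (m.factorial : ℝ) ≠ 0 := Nat.cast_ne_zero.2 m.factorial_ne_zero
  have h1 : ((m:ℝ)+1) ≠ 0 := by positivity
  have h2 : ((m:ℝ)+2) ≠ 0 := by positivity
  have h3 : ((m:ℝ)+3) ≠ 0 := by positivity
  rw [show m+1+2 = m+3 from rfl, hfac]
  field_simp
  ring
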